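/- Let μ ∈ (0,1) and let (φ₀,φ₁,σ) be a subgame perfect equilibrium of the stage game Γ(μ). Then φ₀([max{2α⁻_μ−1,0}, 1]) = 1 and φ₁([max{1−2α⁺_μ,0}, 1]) = 1; that is, Firm 0 never prices below 2α⁻_μ−1 and Firm 1 never prices below 1−2α⁺_μ, where α⁻_μ = μα⁻/(μα⁻+(1−μ)(1−α⁻)) and α⁺_μ = μα⁺/(μα⁺+(1−μ)(1−α⁺)). -/

import Mathlib

open MeasureTheory Set Filter Topology
open scoped ENNReal NNReal

noncomputable section

/-- The consumer's possible actions: buy product 0, buy product 1, or exit. -/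
inductive CAction : Type
  | buy0 : CAction
  | buy1 : CAction
  | exit : CAction

instance : MeasurableSpace CAction := ⊤

/-- A signal structure `(F₀, F₁, S)`: two mutually absolutely continuous
probability measures on a measurable space `S`. -/
structure SignalStructure (S : Type) [MeasurableSpace S] : Type where
  F0 : Measure S
  F1 : Measure S
  prob0 : IsProbabilityMeasure F0
  prob1 : IsProbabilityMeasure F1
  ac01 : F0 ≪ F1
  ac10 : F1 ≪ F0

namespace SignalStructure

variable {S : Type} [MeasurableSpace S]

/-- The reference measure `(F₀ + F₁)/2`. -/
def ref (𝒮 : SignalStructure S) : Measure S := (2 : ℝ≥0∞)⁻¹ • (𝒮.F0 + 𝒮.F1)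

/-- Radon–Nikodym density of `F₀` with respect to `(F₀+F₁)/2`. -/
def f0 (𝒮 : SignalStructure S) : S → ℝ≥0∞ := 𝒮.F0.rnDeriv 𝒮.ref

/-- Radon–Nikodym density of `F₁` with respect to `(F₀+F₁)/2`. -/
def f1 (𝒮 : SignalStructure S) : S → ℝ≥0∞ := 𝒮.F1.rnDeriv 𝒮.ref

/-- The private belief `p(s) = f₀(s)/(f₀(s)+f₁(s))`. -/
def p (𝒮 : SignalStructure S) (s : S) : ℝ :=
  (𝒮.f0 s).toReal / ((𝒮.f0 s).toReal + (𝒮.f1 s).toReal)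

/-- `G₀(x) = F₀ {s | p(s) < x}`, the CDF of the private belief in state 0. -/
def G0 (𝒮 : SignalStructure S) (x : ℝ) : ℝ := (𝒮.F0 {s | 𝒮.p s < x}).toReal

/-- `G₁(x) = F₁ {s | p(s) < x}`, the CDF of the private belief in state 1. -/
def G1 (𝒮 : SignalStructure S) (x : ℝ) : ℝ := (𝒮.F1 {s | 𝒮.p s < x}).toReal

/-- `α⁻ = inf {x | G(x) > 0}`. -/
def alphaLo (𝒮 : SignalStructure S) : ℝ := sInf {x | 0 < 𝒮.G0 x}

/-- `α⁺ = sup {x | G(x) < 1}`. -/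
def alphaHi (𝒮 : SignalStructure S) : ℝ := sSup {x | 𝒮.G0 x < 1}

/-- Signals are bounded if `α⁻ > 0` and `α⁺ < 1`. -/
def Bounded (𝒮 : SignalStructure S) : Prop := 0 < 𝒮.alphaLo ∧ 𝒮.alphaHi < 1

/-- Signals are unbounded if `α⁻ = 0` and `α⁺ = 1`. -/
def Unbounded (𝒮 : SignalStructure S) : Prop := 𝒮.alphaLo = 0 ∧ 𝒮.alphaHi = 1

/-- Assumption 1: `G₀, G₁` are differentiable on `(α⁻, α⁺)` with continuous
nonnegative derivatives `g₀, g₁ : [α⁻, α⁺] → ℝ₊`. -/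
structure Assumption1 (𝒮 : SignalStructure S) (g0 g1 : ℝ → ℝ) : Prop where
  cont0 : ContinuousOn g0 (Icc 𝒮.alphaLo 𝒮.alphaHi)
  cont1 : ContinuousOn g1 (Icc 𝒮.alphaLo 𝒮.alphaHi)
  nonneg0 : ∀ x ∈ Icc 𝒮.alphaLo 𝒮.alphaHi, 0 ≤ g0 x
  nonneg1 : ∀ x ∈ Icc 𝒮.alphaLo 𝒮.alphaHi, 0 ≤ g1 x
  hasDeriv0 : ∀ x ∈ Ioo 𝒮.alphaLo 𝒮.alphaHi, HasDerivAt 𝒮.G0 (g0 x) x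
  hasDeriv1 : ∀ x ∈ Ioo 𝒮.alphaLo 𝒮.alphaHi, HasDerivAt 𝒮.G1 (g1 x) x

/-- The signal structure exhibits vanishing likelihood: `g₁(α⁻) = g₀(α⁺) = 0`. -/
def VanishingLikelihood (𝒮 : SignalStructure S) (g0 g1 : ℝ → ℝ) : Prop :=
  g1 𝒮.alphaLo = 0 ∧ g0 𝒮.alphaHi = 0

end SignalStructure

/-- Bayesian posterior on state 0 from a prior `μ` and a private belief `q`:
`p_μ = μ q / (μ q + (1-μ)(1-q))`. -/
def posterior (μ q : ℝ) : ℝ := μ * q / (μ * q + (1 - μ) * (1 - q))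

/-- The consumer's expected utility, given posterior `q` on state 0 and prices
`τ₀, τ₁`, from each action. -/
def cUtil (q τ0 τ1 : ℝ) : CAction → ℝ
  | CAction.buy0 => q - τ0
  | CAction.buy1 => (1 - q) - τ1
  | CAction.exit => 0

/-- A consumer pure strategy: maps the posted price pair and the signal to an action. -/
abbrev CStrategy (S : Type) : Type := ℝ → ℝ → S → CAction

/-- A mixed price strategy of a firm: a Borel probability measure on `[0,1]`. -/
def IsPriceStrategy (φ : Measure ℝ) : Prop :=
  IsProbabilityMeasure φ ∧ φ (Icc (0:ℝ) 1) = 1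

namespace SignalStructure

variable {S : Type} [MeasurableSpace S]

/-- The signal distribution under prior `μ`: the mixture `μ F₀ + (1-μ) F₁`. -/
def Fmix (𝒮 : SignalStructure S) (μ : ℝ) : Measure S :=
  ENNReal.ofReal μ • 𝒮.F0 + ENNReal.ofReal (1 - μ) • 𝒮.F1

/-- The probability (under prior `μ`) that the consumer takes action `a` when the
pure prices `τ₀, τ₁` are posted. -/
def actProb (𝒮 : SignalStructure S) (μ : ℝ) (σ : CStrategy S) (τ0 τ1 : ℝ) (a : CAction) : ℝ :=
  (𝒮.Fmix μ {s | σ τ0 τ1 s = a}).toReal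

/-- Firm 0's expected payoff in `Γ(μ)` under mixed strategies `φ₀, φ₁` and consumer
strategy `σ`. -/
def Pi0 (𝒮 : SignalStructure S) (μ : ℝ) (φ0 φ1 : Measure ℝ) (σ : CStrategy S) : ℝ :=
  ∫ τ, 𝒮.actProb μ σ τ.1 τ.2 CAction.buy0 * τ.1 ∂(φ0.prod φ1)

/-- Firm 1's expected payoff in `Γ(μ)`. -/
def Pi1 (𝒮 : SignalStructure S) (μ : ℝ) (φ0 φ1 : Measure ℝ) (σ : CStrategy S) : ℝ :=
  ∫ τ, 𝒮.actProb μ σ τ.1 τ.2 CAction.buy1 * τ.2 ∂(φ0.prod φ1)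

/-- The probability that the consumer takes action `a` under mixed price strategies. -/
def actProbMix (𝒮 : SignalStructure S) (μ : ℝ) (φ0 φ1 : Measure ℝ) (σ : CStrategy S)
    (a : CAction) : ℝ :=
  ∫ τ, 𝒮.actProb μ σ τ.1 τ.2 a ∂(φ0.prod φ1)

/-- A subgame perfect equilibrium of the stage game `Γ(μ)`: the consumer strategy is a
best reply to every price pair, and each firm's mixed price strategy maximizes its
expected payoff given the opponent's strategy and the consumer's strategy. -/
structure IsSPE (𝒮 : SignalStructure S) (μ : ℝ) (φ0 φ1 : Measure ℝ) (σ : CStrategy S) :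
    Prop where
  strat0 : IsPriceStrategy φ0
  strat1 : IsPriceStrategy φ1
  meas : ∀ τ0 τ1, Measurable (σ τ0 τ1)
  consumerBR : ∀ τ0 ∈ Icc (0:ℝ) 1, ∀ τ1 ∈ Icc (0:ℝ) 1,
    ∀ᵐ s ∂(𝒮.Fmix μ), ∀ a : CAction,
      cUtil (posterior μ (𝒮.p s)) τ0 τ1 a ≤ cUtil (posterior μ (𝒮.p s)) τ0 τ1 (σ τ0 τ1 s)
  firm0opt : ∀ ψ : Measure ℝ, IsPriceStrategy ψ → 𝒮.Pi0 μ ψ φ1 σ ≤ 𝒮.Pi0 μ φ0 φ1 σ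
  firm1opt : ∀ ψ : Measure ℝ, IsPriceStrategy ψ → 𝒮.Pi1 μ φ0 ψ σ ≤ 𝒮.Pi1 μ φ0 φ1 σ

/-- A deterrence equilibrium: an SPE in which some firm sells with probability zero. -/
def IsDeterrence (𝒮 : SignalStructure S) (μ : ℝ) (φ0 φ1 : Measure ℝ) (σ : CStrategy S) :
    Prop :=
  𝒮.IsSPE μ φ0 φ1 σ ∧
    (𝒮.actProbMix μ φ0 φ1 σ CAction.buy0 = 0 ∨ 𝒮.actProbMix μ φ0 φ1 σ CAction.buy1 = 0)

/-- The market is full at `(μ, σ, τ₀, τ₁)` if the consumer exits with probability zero. -/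
def MarketFull (𝒮 : SignalStructure S) (μ : ℝ) (σ : CStrategy S) (τ0 τ1 : ℝ) : Prop :=
  𝒮.Fmix μ {s | σ τ0 τ1 s = CAction.exit} = 0

open scoped Classical in
/-- The consumer's best-reply threshold `v_μ(τ₀,τ₁)` on the private belief. -/
def v (𝒮 : SignalStructure S) (μ : ℝ) (σ : CStrategy S) (τ0 τ1 : ℝ) : ℝ :=
  if 𝒮.MarketFull μ σ τ0 τ1 then
    (1 - μ) * (1 + τ0 - τ1) / (2 * μ - (2 * μ - 1) * (1 + τ0 - τ1))
  else (1 - μ) * τ0 / (μ - (2 * μ - 1) * τ0)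

end SignalStructure

section AuxLemmas

open MeasureTheory Set

namespace SignalStructure

variable {S : Type} [MeasurableSpace S] (𝒮 : SignalStructure S)

lemma p_nonneg (s : S) : 0 ≤ 𝒮.p s := by
  unfold p
  positivity

lemma p_le_one (s : S) : 𝒮.p s ≤ 1 := by
  unfold p
  apply div_le_one_of_le₀
  · have : (0:ℝ) ≤ (𝒮.f1 s).toReal := ENNReal.toReal_nonneg
    linarith
  · have h0 : (0:ℝ) ≤ (𝒮.f0 s).toReal := ENNReal.toReal_nonneg
    have h1 : (0:ℝ) ≤ (𝒮.f1 s).toReal := ENNReal.toReal_nonneg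
    linarith

lemma p_measurable : Measurable 𝒮.p := by
  apply Measurable.div
  · exact (Measure.measurable_rnDeriv _ _).ennreal_toReal
  · exact ((Measure.measurable_rnDeriv _ _).ennreal_toReal.add
      (Measure.measurable_rnDeriv _ _).ennreal_toReal)

lemma G0_eq_zero_of_nonpos {x : ℝ} (hx : x ≤ 0) : 𝒮.G0 x = 0 := by
  have : {s | 𝒮.p s < x} = (∅ : Set S) := by
    ext s; simp only [mem_setOf_eq, mem_empty_iff_false, iff_false, not_lt]
    exact hx.trans (𝒮.p_nonneg s)
  simp [G0, this]

lemma G0_eq_one_of_one_lt {x : ℝ} (hx : 1 < x) : 𝒮.G0 x = 1 := by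
  haveI := 𝒮.prob0
  have : {s | 𝒮.p s < x} = (univ : Set S) := by
    ext s; simp only [mem_setOf_eq, mem_univ, iff_true]
    exact lt_of_le_of_lt (𝒮.p_le_one s) hx
  simp [G0, this]

lemma G0_nonneg (x : ℝ) : 0 ≤ 𝒮.G0 x := ENNReal.toReal_nonneg

lemma G0_le_one (x : ℝ) : 𝒮.G0 x ≤ 1 := by
  haveI := 𝒮.prob0
  have h : 𝒮.F0 {s | 𝒮.p s < x} ≤ 1 := prob_le_one
  unfold G0
  calc (𝒮.F0 {s | 𝒮.p s < x}).toReal ≤ (1 : ℝ≥0∞).toReal :=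
        ENNReal.toReal_mono (by simp) h
    _ = 1 := by simp

lemma bddBelow_S0 : BddBelow {x : ℝ | 0 < 𝒮.G0 x} := by
  refine ⟨0, fun x hx => ?_⟩
  by_contra h
  push_neg at h
  have := 𝒮.G0_eq_zero_of_nonpos h.le
  simp only [mem_setOf_eq] at hx
  linarith

lemma nonempty_S0 : {x : ℝ | 0 < 𝒮.G0 x}.Nonempty :=
  ⟨2, by simp [𝒮.G0_eq_one_of_one_lt (by norm_num : (1:ℝ) < 2)]⟩

lemma alphaLo_nonneg : 0 ≤ 𝒮.alphaLo := by
  refine le_csInf 𝒮.nonempty_S0 fun b hb => ?_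
  by_contra h
  push_neg at h
  have := 𝒮.G0_eq_zero_of_nonpos h.le
  simp only [mem_setOf_eq] at hb
  linarith

lemma alphaLo_le_one : 𝒮.alphaLo ≤ 1 := by
  by_contra h
  push_neg at h
  have hx : (1 + 𝒮.alphaLo) / 2 ∈ {x : ℝ | 0 < 𝒮.G0 x} := by
    have : (1:ℝ) < (1 + 𝒮.alphaLo) / 2 := by linarith
    simp [mem_setOf_eq, 𝒮.G0_eq_one_of_one_lt this]
  have h2 : 𝒮.alphaLo ≤ (1 + 𝒮.alphaLo) / 2 := csInf_le 𝒮.bddBelow_S0 hx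
  linarith

lemma bddAbove_S1 : BddAbove {x : ℝ | 𝒮.G0 x < 1} := by
  refine ⟨1, fun x hx => ?_⟩
  by_contra h
  push_neg at h
  have := 𝒮.G0_eq_one_of_one_lt h
  simp only [mem_setOf_eq] at hx
  linarith

lemma nonempty_S1 : {x : ℝ | 𝒮.G0 x < 1}.Nonempty :=
  ⟨0, by simp [𝒮.G0_eq_zero_of_nonpos (le_refl (0:ℝ))]⟩

lemma alphaHi_le_one : 𝒮.alphaHi ≤ 1 := by
  refine csSup_le 𝒮.nonempty_S1 fun b hb => ?_
  by_contra h
  push_neg at h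
  have := 𝒮.G0_eq_one_of_one_lt h
  simp only [mem_setOf_eq] at hb
  linarith

lemma alphaHi_nonneg : 0 ≤ 𝒮.alphaHi := by
  apply le_csSup 𝒮.bddAbove_S1
  simp [mem_setOf_eq, 𝒮.G0_eq_zero_of_nonpos (le_refl (0:ℝ))]

lemma F0_lt_alphaLo : 𝒮.F0 {s | 𝒮.p s < 𝒮.alphaLo} = 0 := by
  haveI := 𝒮.prob0
  have hnull : ∀ y : ℝ, y < 𝒮.alphaLo → 𝒮.F0 {s | 𝒮.p s < y} = 0 := by
    intro y hy
    have hG : 𝒮.G0 y = 0 := by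
      by_contra h
      have hpos : 0 < 𝒮.G0 y := lt_of_le_of_ne (𝒮.G0_nonneg y) (Ne.symm h)
      have h2 : 𝒮.alphaLo ≤ y := csInf_le 𝒮.bddBelow_S0 (show y ∈ {x : ℝ | 0 < 𝒮.G0 x} from hpos)
      linarith
    have hne : 𝒮.F0 {s | 𝒮.p s < y} ≠ ⊤ := measure_ne_top _ _
    exact (ENNReal.toReal_eq_zero_iff _).mp hG |>.resolve_right hne
  have hsub : {s | 𝒮.p s < 𝒮.alphaLo} ⊆
      ⋃ n : ℕ, {s | 𝒮.p s < 𝒮.alphaLo - 1 / (n + 1)} := by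
    intro s hs
    simp only [mem_setOf_eq] at hs
    obtain ⟨n, hn⟩ := exists_nat_one_div_lt (show (0:ℝ) < 𝒮.alphaLo - 𝒮.p s by linarith)
    exact mem_iUnion.mpr ⟨n, by simp only [mem_setOf_eq]; linarith⟩
  refine measure_mono_null hsub (measure_iUnion_null fun n => hnull _ ?_)
  have : (0:ℝ) < 1 / (n + 1) := by positivity
  linarith

lemma F0_gt_alphaHi : 𝒮.F0 {s | 𝒮.alphaHi < 𝒮.p s} = 0 := by
  haveI := 𝒮.prob0
  have hnull : ∀ y : ℝ, 𝒮.alphaHi < y → 𝒮.F0 {s | y ≤ 𝒮.p s} = 0 := by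
    intro y hy
    have hG : 𝒮.G0 y = 1 := by
      have h1 : ¬ 𝒮.G0 y < 1 := by
        intro h
        have h2 : y ≤ 𝒮.alphaHi := le_csSup 𝒮.bddAbove_S1 (show y ∈ {x : ℝ | 𝒮.G0 x < 1} from h)
        linarith
      linarith [𝒮.G0_le_one y]
    have hF : 𝒮.F0 {s | 𝒮.p s < y} = 1 := by
      have hne : 𝒮.F0 {s | 𝒮.p s < y} ≠ ⊤ := measure_ne_top _ _
      have hG' : (𝒮.F0 {s | 𝒮.p s < y}).toReal = 1 := hG
      have h3 := ENNReal.ofReal_toReal hne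
      rw [← h3, hG']
      simp
    have hmeas : MeasurableSet {s | 𝒮.p s < y} := 𝒮.p_measurable measurableSet_Iio
    have hcompl : {s | y ≤ 𝒮.p s} = {s | 𝒮.p s < y}ᶜ := by
      ext s; simp [not_lt]
    rw [hcompl, measure_compl hmeas (measure_ne_top _ _), hF, measure_univ, tsub_self]
  have hsub : {s | 𝒮.alphaHi < 𝒮.p s} ⊆
      ⋃ n : ℕ, {s | 𝒮.alphaHi + 1 / (n + 1) ≤ 𝒮.p s} := by
    intro s hs
    simp only [mem_setOf_eq] at hs
    obtain ⟨n, hn⟩ := exists_nat_one_div_lt (show (0:ℝ) < 𝒮.p s - 𝒮.alphaHi by linarith)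
    exact mem_iUnion.mpr ⟨n, by simp only [mem_setOf_eq]; linarith⟩
  refine measure_mono_null hsub (measure_iUnion_null fun n => hnull _ ?_)
  have : (0:ℝ) < 1 / (n + 1) := by positivity
  linarith

lemma Fmix_null {μ : ℝ} {A : Set S} (hA : 𝒮.F0 A = 0) : 𝒮.Fmix μ A = 0 := by
  have h1 : 𝒮.F1 A = 0 := 𝒮.ac10 hA
  simp [Fmix, Measure.add_apply, Measure.smul_apply, hA, h1]

lemma Fmix_univ {μ : ℝ} (h0 : 0 ≤ μ) (h1 : μ ≤ 1) : 𝒮.Fmix μ univ = 1 := by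
  haveI := 𝒮.prob0; haveI := 𝒮.prob1
  simp only [Fmix, Measure.add_apply, Measure.smul_apply, measure_univ, smul_eq_mul, mul_one]
  rw [← ENNReal.ofReal_add h0 (by linarith)]
  norm_num

end SignalStructure

lemma posterior_nonneg {μ q : ℝ} (hμ0 : 0 < μ) (hμ1 : μ < 1) (hq0 : 0 ≤ q) (hq1 : q ≤ 1) :
    0 ≤ posterior μ q := by
  unfold posterior
  apply div_nonneg (by positivity)
  nlinarith

lemma posterior_denom_pos {μ q : ℝ} (hμ0 : 0 < μ) (hμ1 : μ < 1) (hq0 : 0 ≤ q) (hq1 : q ≤ 1) :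
    0 < μ * q + (1 - μ) * (1 - q) := by
  rcases eq_or_lt_of_le hq0 with h | h
  · nlinarith
  · nlinarith

lemma posterior_le_one {μ q : ℝ} (hμ0 : 0 < μ) (hμ1 : μ < 1) (hq0 : 0 ≤ q) (hq1 : q ≤ 1) :
    posterior μ q ≤ 1 := by
  unfold posterior
  rw [div_le_one (posterior_denom_pos hμ0 hμ1 hq0 hq1)]
  nlinarith

lemma posterior_mono {μ a b : ℝ} (hμ0 : 0 < μ) (hμ1 : μ < 1) (ha0 : 0 ≤ a) (hab : a ≤ b)
    (hb1 : b ≤ 1) : posterior μ a ≤ posterior μ b := by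
  unfold posterior
  rw [div_le_div_iff₀ (posterior_denom_pos hμ0 hμ1 ha0 (hab.trans hb1))
    (posterior_denom_pos hμ0 hμ1 (ha0.trans hab) hb1)]
  nlinarith [mul_nonneg (mul_nonneg hμ0.le (by linarith : (0:ℝ) ≤ 1 - μ)) (sub_nonneg.mpr hab)]

end AuxLemmas

section KeyLemmas

open MeasureTheory Set

lemma measure_smul_prod_left {α β : Type*} [MeasurableSpace α] [MeasurableSpace β]
    (μ : Measure α) (ν : Measure β) [SFinite μ] [SFinite ν] (c : ℝ≥0∞) :
    (c • μ).prod ν = c • μ.prod ν := by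
  ext s hs
  rw [Measure.prod_apply hs, Measure.smul_apply, Measure.prod_apply hs, smul_eq_mul,
    lintegral_smul_measure, smul_eq_mul]

lemma measure_prod_smul_right {α β : Type*} [MeasurableSpace α] [MeasurableSpace β]
    (μ : Measure α) (ν : Measure β) [SFinite μ] [SFinite ν] (c : ℝ≥0∞) (hc : c ≠ ⊤) :
    μ.prod (c • ν) = c • μ.prod ν := by
  ext s hs
  rw [Measure.prod_apply hs, Measure.smul_apply, Measure.prod_apply hs, smul_eq_mul,
    ← lintegral_const_mul' _ _ hc]
  simp [Measure.smul_apply]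

/-- If `f(τ₀,τ₁) = τ₀` whenever `τ₀ ∈ [0,c)` and `τ₁ ∈ [0,1]`, and `ρ` maximizes
`∫ f d(·.prod η)` among price strategies, then `ρ` puts no mass on `[0,c)`. -/
lemma key_first (f : ℝ × ℝ → ℝ) (ρ η : Measure ℝ)
    (hρp : IsProbabilityMeasure ρ) (hρ1 : ρ (Icc (0:ℝ) 1) = 1)
    (hηp : IsProbabilityMeasure η) (hη1 : η (Icc (0:ℝ) 1) = 1)
    (c : ℝ) (hc0 : 0 < c) (hc1 : c ≤ 1)
    (hfD : ∀ τ0 ∈ Ico (0:ℝ) c, ∀ τ1 ∈ Icc (0:ℝ) 1, f (τ0, τ1) = τ0)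
    (hopt : ∀ ψ : Measure ℝ, IsPriceStrategy ψ →
      ∫ τ, f τ ∂(ψ.prod η) ≤ ∫ τ, f τ ∂(ρ.prod η)) :
    ρ (Ico (0:ℝ) c) = 0 := by
  haveI := hρp
  haveI := hηp
  by_contra hδ
  set D := Ico (0:ℝ) c with hD
  have hDm : MeasurableSet D := measurableSet_Ico
  have hδpos : (0:ℝ≥0∞) < ρ D := lt_of_le_of_ne (by simp) (Ne.symm hδ)
  have hδne : ρ D ≠ ⊤ := measure_ne_top _ _
  set r := (ρ D).toReal with hr
  have hrpos : 0 < r := ENNReal.toReal_pos hδ hδne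
  have hηc : η ((Icc (0:ℝ) 1)ᶜ) = 0 := by
    rw [measure_compl measurableSet_Icc (measure_ne_top _ _), hη1, measure_univ, tsub_self]
  set m1 := (ρ.restrict D).prod η with hm1
  set m2 := (ρ.restrict Dᶜ).prod η with hm2
  have hsplit : ρ.prod η = m1 + m2 := by
    rw [hm1, hm2, ← Measure.add_prod, Measure.restrict_add_restrict_compl hDm]
  have hm1ae : ∀ᵐ τ ∂m1, τ ∈ D ×ˢ Icc (0:ℝ) 1 := by
    rw [ae_iff]
    refine measure_mono_null (fun τ hτ => ?_)
      (?_ : m1 ((Dᶜ ×ˢ (univ : Set ℝ)) ∪ ((univ : Set ℝ) ×ˢ (Icc (0:ℝ) 1)ᶜ)) = 0)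
    · simp only [mem_setOf_eq, mem_prod, not_and_or] at hτ
      rcases hτ with h | h
      · exact Or.inl ⟨h, mem_univ _⟩
      · exact Or.inr ⟨mem_univ _, h⟩
    · refine measure_union_null ?_ ?_
      · rw [hm1, Measure.prod_prod, Measure.restrict_apply hDm.compl]
        simp
      · rw [hm1, Measure.prod_prod, hηc, mul_zero]
  have hfm1 : f =ᵐ[m1] fun τ => τ.1 :=
    hm1ae.mono fun τ hτ => hfD τ.1 hτ.1 τ.2 hτ.2
  have hintp : Integrable (fun τ : ℝ × ℝ => τ.1) m1 := by
    refine Integrable.mono' (integrable_const 1) continuous_fst.aestronglyMeasurable ?_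
    refine hm1ae.mono fun τ hτ => ?_
    rw [Real.norm_eq_abs, abs_of_nonneg hτ.1.1]
    exact hτ.1.2.le.trans hc1
  have hint1 : Integrable f m1 := hintp.congr hfm1.symm
  set I := ∫ x in D, x ∂ρ with hI
  have hint1val : ∫ τ, f τ ∂m1 = I := by
    rw [integral_congr_ae hfm1, hm1, MeasureTheory.integral_prod _ hintp]
    simp [hI]
  have hIner : IntegrableOn (fun x : ℝ => x) D ρ := by
    have h1 : IntegrableOn (fun x : ℝ => x) (Icc (0:ℝ) c) ρ :=
      continuous_id.continuousOn.integrableOn_Icc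
    exact h1.mono_set Ico_subset_Icc_self
  have hIc : IntegrableOn (fun x : ℝ => c - x) D ρ := (integrable_const c).sub hIner
  have hpos : 0 < ∫ x in D, (c - x) ∂ρ := by
    rw [setIntegral_pos_iff_support_of_nonneg_ae ?_ hIc]
    · refine lt_of_lt_of_le hδpos (measure_mono fun x hx => ?_)
      exact ⟨sub_ne_zero_of_ne hx.2.ne', hx⟩
    · exact (ae_restrict_iff' hDm).mpr (ae_of_all _ fun x hx => by
        simp only [Pi.zero_apply]; linarith [hx.2])
  have hsub' : ∫ x in D, (c - x) ∂ρ = c * r - I := by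
    rw [integral_sub (integrable_const c) hIner, setIntegral_const, smul_eq_mul, hr, measureReal_def]
    ring
  have hIlt : I < c * r := by linarith
  have hInn : 0 ≤ I := setIntegral_nonneg hDm fun x hx => hx.1
  set t := (I / r + c) / 2 with ht
  have hIr : I / r < c := (div_lt_iff₀ hrpos).mpr (by linarith)
  have hIr0 : 0 ≤ I / r := div_nonneg hInn hrpos.le
  have ht0 : 0 < t := by rw [ht]; positivity
  have htc : t < c := by rw [ht]; linarith
  have htI : I < r * t := by
    have hrt : r * t = (I + r * c) / 2 := by
      rw [ht]; field_simp
    rw [hrt]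
    nlinarith
  have htmem : t ∈ Icc (0:ℝ) 1 := ⟨ht0.le, htc.le.trans hc1⟩
  have htD : t ∈ D := ⟨ht0.le, htc⟩
  set dt := (Measure.dirac t).prod η with hdt
  haveI : IsProbabilityMeasure dt := by rw [hdt]; infer_instance
  have hdtae : f =ᵐ[dt] fun _ => t := by
    have hnull : dt (({t}ᶜ ×ˢ (univ : Set ℝ)) ∪ ((univ : Set ℝ) ×ˢ (Icc (0:ℝ) 1)ᶜ)) = 0 := by
      refine measure_union_null ?_ ?_
      · rw [hdt, Measure.prod_prod]; simp
      · rw [hdt, Measure.prod_prod, hηc, mul_zero]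
    rw [EventuallyEq, ae_iff]
    refine measure_mono_null (fun τ hτ => ?_) hnull
    simp only [mem_setOf_eq] at hτ
    by_contra hmem
    simp only [mem_union, mem_prod, mem_compl_iff, mem_singleton_iff, mem_univ, true_and,
      and_true, not_or, not_not] at hmem
    obtain ⟨h1, h2⟩ := hmem
    apply hτ
    calc f τ = f (τ.1, τ.2) := by rw [Prod.mk.eta]
      _ = τ.1 := by rw [h1]; exact hfD t htD τ.2 h2
      _ = t := h1
  have hdtint : Integrable f dt := (integrable_const t).congr hdtae.symm
  have hdtval : ∫ τ, f τ ∂dt = t := by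
    rw [integral_congr_ae hdtae, integral_const, probReal_univ]
    simp
  by_cases hint2 : Integrable f m2
  · set ψ := ρ.restrict Dᶜ + (ρ D) • Measure.dirac t with hψ
    have hψp : IsProbabilityMeasure ψ := by
      constructor
      rw [hψ, Measure.add_apply, Measure.smul_apply,
        Measure.restrict_apply MeasurableSet.univ, univ_inter, smul_eq_mul,
        Measure.dirac_apply_of_mem (mem_univ t), mul_one, add_comm]
      have h := measure_add_measure_compl (μ := ρ) hDm
      rwa [measure_univ] at h
    have hψ1 : ψ (Icc (0:ℝ) 1) = 1 := by
      rw [hψ, Measure.add_apply, Measure.smul_apply,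
        Measure.restrict_apply measurableSet_Icc, smul_eq_mul,
        Measure.dirac_apply_of_mem htmem, mul_one]
      have hDsub : D ⊆ Icc (0:ℝ) 1 := fun x hx => ⟨hx.1, hx.2.le.trans hc1⟩
      have hdiff : Icc (0:ℝ) 1 ∩ Dᶜ = Icc (0:ℝ) 1 \ D := rfl
      rw [hdiff, measure_diff hDsub hDm.nullMeasurableSet hδne, hρ1]
      exact tsub_add_cancel_of_le (hρ1 ▸ measure_mono hDsub)
    have hψprod : ψ.prod η = m2 + (ρ D) • dt := by
      rw [hψ, Measure.add_prod, hm2, hdt, measure_smul_prod_left]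
    have hρprodval : ∫ τ, f τ ∂(ρ.prod η) = I + ∫ τ, f τ ∂m2 := by
      rw [hsplit, integral_add_measure hint1 hint2, hint1val]
    have hψval : ∫ τ, f τ ∂(ψ.prod η) = ∫ τ, f τ ∂m2 + r * t := by
      rw [hψprod, integral_add_measure hint2 (hdtint.smul_measure hδne),
        integral_smul_measure, hdtval, smul_eq_mul, hr]
    have hle := hopt ψ ⟨hψp, hψ1⟩
    rw [hψval, hρprodval] at hle
    linarith
  · have hle2 : m2 ≤ ρ.prod η := by
      rw [hsplit]
      exact Measure.le_add_left (le_refl m2)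
    have hnint : ¬ Integrable f (ρ.prod η) := fun h => hint2 (h.mono_measure hle2)
    have hρ0 : ∫ τ, f τ ∂(ρ.prod η) = 0 := integral_undef hnint
    have hψps : IsPriceStrategy (Measure.dirac t) :=
      ⟨by infer_instance, Measure.dirac_apply_of_mem htmem⟩
    have hle := hopt (Measure.dirac t) hψps
    rw [hρ0, ← hdt, hdtval] at hle
    linarith

/-- Mirror image of `key_first` for the second coordinate. -/
lemma key_second (f : ℝ × ℝ → ℝ) (ρ η : Measure ℝ)
    (hρp : IsProbabilityMeasure ρ) (hρ1 : ρ (Icc (0:ℝ) 1) = 1)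
    (hηp : IsProbabilityMeasure η) (hη1 : η (Icc (0:ℝ) 1) = 1)
    (c : ℝ) (hc0 : 0 < c) (hc1 : c ≤ 1)
    (hfD : ∀ τ0 ∈ Icc (0:ℝ) 1, ∀ τ1 ∈ Ico (0:ℝ) c, f (τ0, τ1) = τ1)
    (hopt : ∀ ψ : Measure ℝ, IsPriceStrategy ψ →
      ∫ τ, f τ ∂(η.prod ψ) ≤ ∫ τ, f τ ∂(η.prod ρ)) :
    ρ (Ico (0:ℝ) c) = 0 := by
  haveI := hρp
  haveI := hηp
  by_contra hδ
  set D := Ico (0:ℝ) c with hD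
  have hDm : MeasurableSet D := measurableSet_Ico
  have hδpos : (0:ℝ≥0∞) < ρ D := lt_of_le_of_ne (by simp) (Ne.symm hδ)
  have hδne : ρ D ≠ ⊤ := measure_ne_top _ _
  set r := (ρ D).toReal with hr
  have hrpos : 0 < r := ENNReal.toReal_pos hδ hδne
  have hηc : η ((Icc (0:ℝ) 1)ᶜ) = 0 := by
    rw [measure_compl measurableSet_Icc (measure_ne_top _ _), hη1, measure_univ, tsub_self]
  set m1 := η.prod (ρ.restrict D) with hm1
  set m2 := η.prod (ρ.restrict Dᶜ) with hm2
  have hsplit : η.prod ρ = m1 + m2 := by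
    rw [hm1, hm2, ← Measure.prod_add, Measure.restrict_add_restrict_compl hDm]
  have hm1ae : ∀ᵐ τ ∂m1, τ ∈ Icc (0:ℝ) 1 ×ˢ D := by
    rw [ae_iff]
    refine measure_mono_null (fun τ hτ => ?_)
      (?_ : m1 (((Icc (0:ℝ) 1)ᶜ ×ˢ (univ : Set ℝ)) ∪ ((univ : Set ℝ) ×ˢ Dᶜ)) = 0)
    · simp only [mem_setOf_eq, mem_prod, not_and_or] at hτ
      rcases hτ with h | h
      · exact Or.inl ⟨h, mem_univ _⟩
      · exact Or.inr ⟨mem_univ _, h⟩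
    · refine measure_union_null ?_ ?_
      · rw [hm1, Measure.prod_prod, hηc, zero_mul]
      · rw [hm1, Measure.prod_prod, Measure.restrict_apply hDm.compl]
        simp
  have hfm1 : f =ᵐ[m1] fun τ => τ.2 :=
    hm1ae.mono fun τ hτ => hfD τ.1 hτ.1 τ.2 hτ.2
  have hintp : Integrable (fun τ : ℝ × ℝ => τ.2) m1 := by
    refine Integrable.mono' (integrable_const 1) continuous_snd.aestronglyMeasurable ?_
    refine hm1ae.mono fun τ hτ => ?_
    rw [Real.norm_eq_abs, abs_of_nonneg hτ.2.1]
    exact hτ.2.2.le.trans hc1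
  have hint1 : Integrable f m1 := hintp.congr hfm1.symm
  set I := ∫ x in D, x ∂ρ with hI
  have hint1val : ∫ τ, f τ ∂m1 = I := by
    rw [integral_congr_ae hfm1, hm1, MeasureTheory.integral_prod _ hintp]
    simp [hI]
  have hIner : IntegrableOn (fun x : ℝ => x) D ρ := by
    have h1 : IntegrableOn (fun x : ℝ => x) (Icc (0:ℝ) c) ρ :=
      continuous_id.continuousOn.integrableOn_Icc
    exact h1.mono_set Ico_subset_Icc_self
  have hIc : IntegrableOn (fun x : ℝ => c - x) D ρ := (integrable_const c).sub hIner
  have hpos : 0 < ∫ x in D, (c - x) ∂ρ := by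
    rw [setIntegral_pos_iff_support_of_nonneg_ae ?_ hIc]
    · refine lt_of_lt_of_le hδpos (measure_mono fun x hx => ?_)
      exact ⟨sub_ne_zero_of_ne hx.2.ne', hx⟩
    · exact (ae_restrict_iff' hDm).mpr (ae_of_all _ fun x hx => by
        simp only [Pi.zero_apply]; linarith [hx.2])
  have hsub' : ∫ x in D, (c - x) ∂ρ = c * r - I := by
    rw [integral_sub (integrable_const c) hIner, setIntegral_const, smul_eq_mul, hr, measureReal_def]
    ring
  have hIlt : I < c * r := by linarith
  have hInn : 0 ≤ I := setIntegral_nonneg hDm fun x hx => hx.1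
  set t := (I / r + c) / 2 with ht
  have hIr : I / r < c := (div_lt_iff₀ hrpos).mpr (by linarith)
  have hIr0 : 0 ≤ I / r := div_nonneg hInn hrpos.le
  have ht0 : 0 < t := by rw [ht]; positivity
  have htc : t < c := by rw [ht]; linarith
  have htI : I < r * t := by
    have hrt : r * t = (I + r * c) / 2 := by
      rw [ht]; field_simp
    rw [hrt]
    nlinarith
  have htmem : t ∈ Icc (0:ℝ) 1 := ⟨ht0.le, htc.le.trans hc1⟩
  have htD : t ∈ D := ⟨ht0.le, htc⟩
  set dt := η.prod (Measure.dirac t) with hdt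
  haveI : IsProbabilityMeasure dt := by rw [hdt]; infer_instance
  have hdtae : f =ᵐ[dt] fun _ => t := by
    have hnull : dt (((Icc (0:ℝ) 1)ᶜ ×ˢ (univ : Set ℝ)) ∪ ((univ : Set ℝ) ×ˢ {t}ᶜ)) = 0 := by
      refine measure_union_null ?_ ?_
      · rw [hdt, Measure.prod_prod, hηc, zero_mul]
      · rw [hdt, Measure.prod_prod]; simp
    rw [EventuallyEq, ae_iff]
    refine measure_mono_null (fun τ hτ => ?_) hnull
    simp only [mem_setOf_eq] at hτ
    by_contra hmem
    simp only [mem_union, mem_prod, mem_compl_iff, mem_singleton_iff, mem_univ, true_and,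
      and_true, not_or, not_not] at hmem
    obtain ⟨h1, h2⟩ := hmem
    apply hτ
    calc f τ = f (τ.1, τ.2) := by rw [Prod.mk.eta]
      _ = τ.2 := by rw [h2]; exact hfD τ.1 h1 t htD
      _ = t := h2
  have hdtint : Integrable f dt := (integrable_const t).congr hdtae.symm
  have hdtval : ∫ τ, f τ ∂dt = t := by
    rw [integral_congr_ae hdtae, integral_const, probReal_univ]
    simp
  by_cases hint2 : Integrable f m2
  · set ψ := ρ.restrict Dᶜ + (ρ D) • Measure.dirac t with hψ
    have hψp : IsProbabilityMeasure ψ := by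
      constructor
      rw [hψ, Measure.add_apply, Measure.smul_apply,
        Measure.restrict_apply MeasurableSet.univ, univ_inter, smul_eq_mul,
        Measure.dirac_apply_of_mem (mem_univ t), mul_one, add_comm]
      have h := measure_add_measure_compl (μ := ρ) hDm
      rwa [measure_univ] at h
    have hψ1 : ψ (Icc (0:ℝ) 1) = 1 := by
      rw [hψ, Measure.add_apply, Measure.smul_apply,
        Measure.restrict_apply measurableSet_Icc, smul_eq_mul,
        Measure.dirac_apply_of_mem htmem, mul_one]
      have hDsub : D ⊆ Icc (0:ℝ) 1 := fun x hx => ⟨hx.1, hx.2.le.trans hc1⟩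
      have hdiff : Icc (0:ℝ) 1 ∩ Dᶜ = Icc (0:ℝ) 1 \ D := rfl
      rw [hdiff, measure_diff hDsub hDm.nullMeasurableSet hδne, hρ1]
      exact tsub_add_cancel_of_le (hρ1 ▸ measure_mono hDsub)
    have hψprod : η.prod ψ = m2 + (ρ D) • dt := by
      rw [hψ, Measure.prod_add, hm2, hdt, measure_prod_smul_right _ _ _ hδne]
    have hρprodval : ∫ τ, f τ ∂(η.prod ρ) = I + ∫ τ, f τ ∂m2 := by
      rw [hsplit, integral_add_measure hint1 hint2, hint1val]
    have hψval : ∫ τ, f τ ∂(η.prod ψ) = ∫ τ, f τ ∂m2 + r * t := by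
      rw [hψprod, integral_add_measure hint2 (hdtint.smul_measure hδne),
        integral_smul_measure, hdtval, smul_eq_mul, hr]
    have hle := hopt ψ ⟨hψp, hψ1⟩
    rw [hψval, hρprodval] at hle
    linarith
  · have hle2 : m2 ≤ η.prod ρ := by
      rw [hsplit]
      exact Measure.le_add_left (le_refl m2)
    have hnint : ¬ Integrable f (η.prod ρ) := fun h => hint2 (h.mono_measure hle2)
    have hρ0 : ∫ τ, f τ ∂(η.prod ρ) = 0 := integral_undef hnint
    have hψps : IsPriceStrategy (Measure.dirac t) :=
      ⟨by infer_instance, Measure.dirac_apply_of_mem htmem⟩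
    have hle := hopt (Measure.dirac t) hψps
    rw [hρ0, ← hdt, hdtval] at hle
    linarith

end KeyLemmas

/-- In every SPE of Γ(μ), Firm 0 never prices below 2α⁻_μ − 1 and
Firm 1 never prices below 1 − 2α⁺_μ:
φ₀([max{2α⁻_μ−1,0},1]) = 1 and φ₁([max{1−2α⁺_μ,0},1]) = 1. -/
theorem stmt5 {S : Type} [MeasurableSpace S] (𝒮 : SignalStructure S)
    (g0 g1 : ℝ → ℝ) (hA : 𝒮.Assumption1 g0 g1)
    (μ : ℝ) (hμ : μ ∈ Ioo (0:ℝ) 1)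
    (φ0 φ1 : Measure ℝ) (σ : CStrategy S)
    (hSPE : 𝒮.IsSPE μ φ0 φ1 σ) :
    φ0 (Icc (max (2 * posterior μ 𝒮.alphaLo - 1) 0) 1) = 1 ∧
      φ1 (Icc (max (1 - 2 * posterior μ 𝒮.alphaHi) 0) 1) = 1 := by
  haveI := hSPE.strat0.1
  haveI := hSPE.strat1.1
  obtain ⟨hμ0, hμ1⟩ := hμ
  -- a.e. bounds on the private belief
  have haeLo : ∀ᵐ s ∂(𝒮.Fmix μ), 𝒮.alphaLo ≤ 𝒮.p s := by
    rw [ae_iff]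
    refine measure_mono_null (fun s hs => ?_) (𝒮.Fmix_null (μ := μ) 𝒮.F0_lt_alphaLo)
    simpa [not_le] using hs
  have haeHi : ∀ᵐ s ∂(𝒮.Fmix μ), 𝒮.p s ≤ 𝒮.alphaHi := by
    rw [ae_iff]
    refine measure_mono_null (fun s hs => ?_) (𝒮.Fmix_null (μ := μ) 𝒮.F0_gt_alphaHi)
    simpa [not_le] using hs
  set pLo := posterior μ 𝒮.alphaLo with hpLo
  set pHi := posterior μ 𝒮.alphaHi with hpHi
  -- consumer behaviour at very low prices
  have hprob : ∀ τ0 τ1 : ℝ, ∀ a : CAction,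
      (∀ᵐ s ∂(𝒮.Fmix μ), σ τ0 τ1 s = a) → 𝒮.actProb μ σ τ0 τ1 a = 1 := by
    intro τ0 τ1 a hae
    have hc : 𝒮.Fmix μ {s | σ τ0 τ1 s = a}ᶜ = 0 := by
      rw [ae_iff] at hae
      simpa [compl_setOf] using hae
    have huniv : 𝒮.Fmix μ univ = 1 := 𝒮.Fmix_univ hμ0.le hμ1.le
    have hle : (1:ℝ≥0∞) ≤ 𝒮.Fmix μ {s | σ τ0 τ1 s = a} := by
      calc (1:ℝ≥0∞) = 𝒮.Fmix μ univ := huniv.symm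
        _ = 𝒮.Fmix μ ({s | σ τ0 τ1 s = a} ∪ {s | σ τ0 τ1 s = a}ᶜ) := by
            rw [union_compl_self]
        _ ≤ 𝒮.Fmix μ {s | σ τ0 τ1 s = a} + 𝒮.Fmix μ {s | σ τ0 τ1 s = a}ᶜ :=
            measure_union_le _ _
        _ = 𝒮.Fmix μ {s | σ τ0 τ1 s = a} := by rw [hc, add_zero]
    have heq : 𝒮.Fmix μ {s | σ τ0 τ1 s = a} = 1 :=
      le_antisymm (huniv ▸ measure_mono (subset_univ _)) hle
    rw [SignalStructure.actProb, heq]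
    simp
  have hbuy0 : ∀ τ0 ∈ Icc (0:ℝ) 1, τ0 < 2 * pLo - 1 → ∀ τ1 ∈ Icc (0:ℝ) 1,
      𝒮.actProb μ σ τ0 τ1 CAction.buy0 = 1 := by
    intro τ0 hτ0 hτ0lt τ1 hτ1
    refine hprob τ0 τ1 CAction.buy0 ?_
    filter_upwards [hSPE.consumerBR τ0 hτ0 τ1 hτ1, haeLo] with s hs hlo
    set q := posterior μ (𝒮.p s) with hq
    have hq1 : q ≤ 1 := posterior_le_one hμ0 hμ1 (𝒮.p_nonneg s) (𝒮.p_le_one s)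
    have hqLo : pLo ≤ q := posterior_mono hμ0 hμ1 𝒮.alphaLo_nonneg hlo (𝒮.p_le_one s)
    have hmain : 1 - q < q - τ0 := by linarith
    have hbr := hs CAction.buy0
    cases hσ : σ τ0 τ1 s with
    | buy0 => rfl
    | buy1 =>
        rw [hσ] at hbr
        simp only [cUtil] at hbr
        linarith [hτ1.1]
    | exit =>
        rw [hσ] at hbr
        simp only [cUtil] at hbr
        linarith
  have hbuy1 : ∀ τ1 ∈ Icc (0:ℝ) 1, τ1 < 1 - 2 * pHi → ∀ τ0 ∈ Icc (0:ℝ) 1,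
      𝒮.actProb μ σ τ0 τ1 CAction.buy1 = 1 := by
    intro τ1 hτ1 hτ1lt τ0 hτ0
    refine hprob τ0 τ1 CAction.buy1 ?_
    filter_upwards [hSPE.consumerBR τ0 hτ0 τ1 hτ1, haeHi] with s hs hhi
    set q := posterior μ (𝒮.p s) with hq
    have hq0 : 0 ≤ q := posterior_nonneg hμ0 hμ1 (𝒮.p_nonneg s) (𝒮.p_le_one s)
    have hqHi : q ≤ pHi := posterior_mono hμ0 hμ1 (𝒮.p_nonneg s) hhi 𝒮.alphaHi_le_one
    have hmain : q < (1 - q) - τ1 := by linarith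
    have hbr := hs CAction.buy1
    cases hσ : σ τ0 τ1 s with
    | buy1 => rfl
    | buy0 =>
        rw [hσ] at hbr
        simp only [cUtil] at hbr
        linarith [hτ0.1]
    | exit =>
        rw [hσ] at hbr
        simp only [cUtil] at hbr
        linarith
  have hpLo1 : pLo ≤ 1 := posterior_le_one hμ0 hμ1 𝒮.alphaLo_nonneg 𝒮.alphaLo_le_one
  have hpHi0 : 0 ≤ pHi := posterior_nonneg hμ0 hμ1 𝒮.alphaHi_nonneg 𝒮.alphaHi_le_one
  constructor
  · -- Firm 0
    rcases le_or_gt (2 * pLo - 1) 0 with h | h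
    · rw [max_eq_right h]
      exact hSPE.strat0.2
    · rw [max_eq_left h.le]
      set c := 2 * pLo - 1 with hcdef
      have hc1 : c ≤ 1 := by rw [hcdef]; linarith
      have hzero : φ0 (Ico (0:ℝ) c) = 0 := by
        refine key_first (fun τ : ℝ × ℝ => 𝒮.actProb μ σ τ.1 τ.2 CAction.buy0 * τ.1)
          φ0 φ1 hSPE.strat0.1 hSPE.strat0.2 hSPE.strat1.1 hSPE.strat1.2 c h hc1 ?_ ?_
        · intro τ0 hτ0 τ1 hτ1
          have := hbuy0 τ0 ⟨hτ0.1, hτ0.2.le.trans hc1⟩ hτ0.2 τ1 hτ1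
          simp only [this, one_mul]
        · intro ψ hψ
          simpa [SignalStructure.Pi0] using hSPE.firm0opt ψ hψ
      have hsub : Icc (0:ℝ) 1 ⊆ Ico 0 c ∪ Icc c 1 := by
        intro x hx
        rcases lt_or_ge x c with h' | h'
        · exact Or.inl ⟨hx.1, h'⟩
        · exact Or.inr ⟨h', hx.2⟩
      have h1 : (1:ℝ≥0∞) ≤ φ0 (Icc c 1) := by
        calc (1:ℝ≥0∞) = φ0 (Icc 0 1) := hSPE.strat0.2.symm
          _ ≤ φ0 (Ico 0 c ∪ Icc c 1) := measure_mono hsub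
          _ ≤ φ0 (Ico 0 c) + φ0 (Icc c 1) := measure_union_le _ _
          _ = φ0 (Icc c 1) := by rw [hzero, zero_add]
      exact le_antisymm (le_of_le_of_eq (measure_mono (subset_univ _)) measure_univ) h1
  · -- Firm 1
    rcases le_or_gt (1 - 2 * pHi) 0 with h | h
    · rw [max_eq_right h]
      exact hSPE.strat1.2
    · rw [max_eq_left h.le]
      set c := 1 - 2 * pHi with hcdef
      have hc1 : c ≤ 1 := by rw [hcdef]; linarith
      have hzero : φ1 (Ico (0:ℝ) c) = 0 := by
        refine key_second (fun τ : ℝ × ℝ => 𝒮.actProb μ σ τ.1 τ.2 CAction.buy1 * τ.2)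
          φ1 φ0 hSPE.strat1.1 hSPE.strat1.2 hSPE.strat0.1 hSPE.strat0.2 c h hc1 ?_ ?_
        · intro τ0 hτ0 τ1 hτ1
          have := hbuy1 τ1 ⟨hτ1.1, hτ1.2.le.trans hc1⟩ hτ1.2 τ0 hτ0
          simp only [this, one_mul]
        · intro ψ hψ
          simpa [SignalStructure.Pi1] using hSPE.firm1opt ψ hψ
      have hsub : Icc (0:ℝ) 1 ⊆ Ico 0 c ∪ Icc c 1 := by
        intro x hx
        rcases lt_or_ge x c with h' | h'
        · exact Or.inl ⟨hx.1, h'⟩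
        · exact Or.inr ⟨h', hx.2⟩
      have h1 : (1:ℝ≥0∞) ≤ φ1 (Icc c 1) := by
        calc (1:ℝ≥0∞) = φ1 (Icc 0 1) := hSPE.strat1.2.symm
          _ ≤ φ1 (Ico 0 c ∪ Icc c 1) := measure_mono hsub
          _ ≤ φ1 (Ico 0 c) + φ1 (Icc c 1) := measure_union_le _ _
          _ = φ1 (Icc c 1) := by rw [hzero, zero_add]
      exact le_antisymm (le_of_le_of_eq (measure_mono (subset_univ _)) measure_univ) h1
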